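/- arXiv:2101.03763 — 4 statements merged into one kernel-verified Lean document; each statement's English description precedes it below -/
import Mathlib

section
/- (Lemma 2.1(i), sufficient decrease) For every k ≥ 1, ψ(x^k, x^{k-1}, ε^k) − ψ(x^{k+1}, x^k, ε^{k+1}) ≥ (β/2)(1 − ᾱ²) ‖x^k − x^{k-1}‖₂². -/
open Filter
open scoped BigOperators InnerProductSpace

noncomputable section

/-- Real n-dimensional Euclidean space. -/
abbrev Vec (n : ℕ) := EuclideanSpace ℝ (Fin n)

/-- The smoothed objective `F(x, ε) = f(x) + λ ∑ᵢ (|xᵢ| + εᵢ)^p`. -/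
def Fobj (n : ℕ) (p lam : ℝ) (f : Vec n → ℝ) (z : Vec n) (ε : Fin n → ℝ) : ℝ :=
  f z + lam * ∑ i, (|z i| + ε i) ^ p

/-- The merit function `ψ(x, y, ε) = F(x, ε) + (β/2)‖x − y‖²`. -/
def psiObj (n : ℕ) (p lam β : ℝ) (f : Vec n → ℝ) (z y : Vec n) (ε : Fin n → ℝ) : ℝ :=
  Fobj n p lam f z ε + β / 2 * ‖z - y‖ ^ 2

/-- The weighted-ℓ₁ subproblem objective at iteration `k`:
`⟨∇f(yₖ), z⟩ + (β/2)‖z − yₖ‖² + λ ∑ᵢ wᵢᵏ |zᵢ|` with `wᵢᵏ = p(|xᵢᵏ| + εᵢᵏ)^{p−1}`. -/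
def subObj (n : ℕ) (p lam β : ℝ) (f : Vec n → ℝ) (xk yk : Vec n) (εk : Fin n → ℝ)
    (z : Vec n) : ℝ :=
  ⟪gradient f yk, z⟫_ℝ + β / 2 * ‖z - yk‖ ^ 2
    + lam * ∑ i, (p * (|xk i| + εk i) ^ (p - 1)) * |z i|

/-- All the hypotheses of the EIRL1 algorithm (Algorithm 1) together with
Assumption 2.1.  The convention `x⁻¹ = x⁰` is encoded through truncated
subtraction on ℕ (`x (k-1) = x 0` for `k = 0`). -/
structure EIRL1 (n : ℕ) (p lam β Lf μ αbar : ℝ) (f : Vec n → ℝ)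
    (x y : ℕ → Vec n) (ε : ℕ → Fin n → ℝ) (α : ℕ → ℝ) : Prop where
  hn : 1 ≤ n
  hp0 : 0 < p
  hp1 : p < 1
  hlam : 0 < lam
  hμ0 : 0 < μ
  hμ1 : μ < 1
  hLf : 0 ≤ Lf
  hβ : Lf < β
  hconv : ConvexOn ℝ Set.univ f
  hdiff : ContDiff ℝ 1 f
  hlip : ∀ a b, ‖gradient f a - gradient f b‖ ≤ Lf * ‖a - b‖
  hαbar0 : 0 ≤ αbar
  hαbar1 : αbar < 1
  hα0 : ∀ k, 0 ≤ α k
  hα1 : ∀ k, α k ≤ αbar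
  hε0 : ∀ i, 0 < ε 0 i
  hεpos : ∀ k i, 0 < ε (k + 1) i
  hεdec : ∀ k i, ε (k + 1) i ≤ μ * ε k i
  hy : ∀ k, y k = x k + α k • (x k - x (k - 1))
  hmin : ∀ k z, z ≠ x (k + 1) →
    subObj n p lam β f (x k) (y k) (ε k) (x (k + 1)) < subObj n p lam β f (x k) (y k) (ε k) z
  hlevel : Bornology.IsBounded {z : Vec n | Fobj n p lam f z 0 ≤ Fobj n p lam f (x 0) (ε 0)}

/-! ### Auxiliary lemmas -/

/-- Tangent-line (concavity) inequality for `t ↦ t^p`, `0 < p < 1`. -/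
lemma rpow_tangent {p : ℝ} (hp0 : 0 < p) (hp1 : p < 1) {a b : ℝ} (ha : 0 < a) (hb : 0 ≤ b) :
    b ^ p ≤ a ^ p + p * a ^ (p - 1) * (b - a) := by
  have hs : -1 ≤ b / a - 1 := by
    have := div_nonneg hb ha.le; linarith
  have key := rpow_one_add_le_one_add_mul_self hs hp0.le hp1.le
  have h1 : (1 : ℝ) + (b / a - 1) = b / a := by ring
  rw [h1] at key
  have hap : (0:ℝ) < a ^ p := Real.rpow_pos_of_pos ha p
  have h2 : (b/a) ^ p = b ^ p / a ^ p := Real.div_rpow hb ha.le p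
  rw [h2] at key
  have key2 : b ^ p ≤ (1 + p * (b / a - 1)) * a ^ p := by
    have := mul_le_mul_of_nonneg_right key hap.le
    rwa [div_mul_cancel₀ _ hap.ne'] at this
  have h3 : a ^ (p - 1) = a ^ p / a := by
    rw [Real.rpow_sub ha, Real.rpow_one]
  calc b ^ p ≤ (1 + p * (b / a - 1)) * a ^ p := key2
    _ = a ^ p + p * a ^ (p - 1) * (b - a) := by rw [h3]; field_simp

/-- Two-point norm-square identity for convex combinations. -/
lemma norm_combo {n : ℕ} (u v : Vec n) (t : ℝ) :
    ‖(1-t)•u + t•v‖^2 = (1-t)*‖u‖^2 + t*‖v‖^2 - t*(1-t)*‖u-v‖^2 := by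
  have h : ∀ w : Vec n, ‖w‖^2 = ⟪w,w⟫_ℝ := fun w => (real_inner_self_eq_norm_sq w).symm
  rw [h, h, h, h]
  simp only [inner_add_left, inner_add_right, inner_sub_left, inner_sub_right,
    real_inner_smul_left, real_inner_smul_right]
  rw [real_inner_comm v u]
  ring

/-- Derivative of `f` along a line. -/
lemma hasDerivAt_comp_line {n : ℕ} (f : Vec n → ℝ) (hf : Differentiable ℝ f) (a v : Vec n)
    (t : ℝ) : HasDerivAt (fun s : ℝ => f (a + s • v)) ⟪gradient f (a + t • v), v⟫_ℝ t := by
  have h1 : HasDerivAt (fun s : ℝ => a + s • v) v t := by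
    simpa using ((hasDerivAt_id t).smul_const v).const_add a
  have h3 := (hf (a + t • v)).hasGradientAt
  rw [hasGradientAt_iff_hasFDerivAt] at h3
  have h4 := h3.comp_hasDerivAt t h1
  simpa [Function.comp_def, InnerProductSpace.toDual_apply_apply] using h4

/-- The descent lemma for functions with Lipschitz gradient. -/
lemma descent_lemma {n : ℕ} (f : Vec n → ℝ) (hf : ContDiff ℝ 1 f) (Lf : ℝ)
    (hlip : ∀ a b, ‖gradient f a - gradient f b‖ ≤ Lf * ‖a - b‖) (a b : Vec n) :
    f b ≤ f a + ⟪gradient f a, b - a⟫_ℝ + Lf / 2 * ‖b - a‖ ^ 2 := by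
  have hdf : Differentiable ℝ f := hf.differentiable one_ne_zero
  set v := b - a with hv
  set C1 : ℝ := ⟪gradient f a, v⟫_ℝ with hC1
  set C2 : ℝ := Lf / 2 * ‖v‖ ^ 2 with hC2
  set h : ℝ → ℝ := fun t => f (a + t • v) - t * C1 - C2 * t ^ 2 with hh_def
  have hh : ∀ t : ℝ, HasDerivAt h
      (⟪gradient f (a + t • v), v⟫_ℝ - C1 - C2 * (2 * t)) t := by
    intro t
    have d1 := hasDerivAt_comp_line f hdf a v t
    have d2 : HasDerivAt (fun t : ℝ => t * C1) C1 t := by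
      simpa using (hasDerivAt_id t).mul_const C1
    have d3 : HasDerivAt (fun t : ℝ => C2 * t ^ 2) (C2 * (2 * t)) t := by
      have := (hasDerivAt_pow 2 t).const_mul C2
      simpa [mul_comm] using this
    exact (d1.sub d2).sub d3
  have anti : AntitoneOn h (Set.Ici (0:ℝ)) := by
    apply antitoneOn_of_deriv_nonpos (convex_Ici 0)
    · have hdh : Differentiable ℝ h := fun t => (hh t).differentiableAt
      exact hdh.continuous.continuousOn
    · have hdh : Differentiable ℝ h := fun t => (hh t).differentiableAt
      exact hdh.differentiableOn
    · intro t ht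
      rw [interior_Ici] at ht
      rw [(hh t).deriv]
      have hls : ⟪gradient f (a + t • v) - gradient f a, v⟫_ℝ
          ≤ ‖gradient f (a + t • v) - gradient f a‖ * ‖v‖ := real_inner_le_norm _ _
      have hlp := hlip (a + t • v) a
      have he : ‖a + t • v - a‖ = t * ‖v‖ := by
        simp [norm_smul, abs_of_pos (Set.mem_Ioi.mp ht)]
      rw [he] at hlp
      rw [inner_sub_left] at hls
      rw [hC1, hC2]
      have hchain := le_trans hls (mul_le_mul_of_nonneg_right hlp (norm_nonneg v))
      have hid : Lf * (t * ‖v‖) * ‖v‖ = Lf / 2 * ‖v‖ ^ 2 * (2 * t) := by ring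
      linarith [hchain, hid.le, hid.ge]
  have h10 : h 1 ≤ h 0 := anti (le_refl (0:ℝ)) (by norm_num : (1:ℝ) ∈ Set.Ici (0:ℝ)) zero_le_one
  have e1 : a + (1:ℝ) • v = b := by simp [hv]
  have e0 : a + (0:ℝ) • v = a := by simp
  simp only [hh_def, e1, e0, one_mul, one_pow, mul_one, zero_mul, mul_zero, sub_zero,
    pow_two] at h10
  nlinarith [h10]

/-- Gradient inequality for convex differentiable functions. -/
lemma convex_lb {n : ℕ} (f : Vec n → ℝ) (hf : ContDiff ℝ 1 f)
    (hconv : ConvexOn ℝ Set.univ f) (a b : Vec n) :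
    f a + ⟪gradient f a, b - a⟫_ℝ ≤ f b := by
  have hdf : Differentiable ℝ f := hf.differentiable one_ne_zero
  set v := b - a with hv
  have hφ : ConvexOn ℝ Set.univ (fun t : ℝ => f (a + t • v)) := by
    have := hconv.comp_affineMap (AffineMap.lineMap a b)
    have he : (f ∘ ⇑(AffineMap.lineMap a b)) = fun t : ℝ => f (a + t • v) := by
      funext t
      simp [AffineMap.lineMap_apply, hv, add_comm]
    rw [he] at this
    simpa using this
  have hd := hasDerivAt_comp_line f hdf a v 0
  rw [show a + (0:ℝ) • v = a from by simp] at hd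
  have key := hφ.le_slope_of_hasDerivAt (Set.mem_univ (0:ℝ)) (Set.mem_univ (1:ℝ))
    zero_lt_one hd
  rw [slope_def_field] at key
  simp only [one_smul, zero_smul, add_zero, sub_zero, div_one] at key
  rw [show a + v = b from by simp [hv]] at key
  linarith [key]

lemma limit_step {A D : ℝ} (hA : 0 < A) (h : ∀ t : ℝ, 0 < t → t < 1 → (1-t)*A ≤ D) :
    A ≤ D := by
  by_contra hcon
  push_neg at hcon
  have h12 := h (1/2) (by norm_num) (by norm_num)
  have hD : 0 < D := by linarith
  have ht00 : 0 < (A-D)/(2*A) := div_pos (by linarith) (by linarith)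
  have ht01 : (A-D)/(2*A) < 1 := by
    rw [div_lt_one (by linarith : (0:ℝ) < 2*A)]; linarith
  have hkey := h _ ht00 ht01
  have hmul : (A-D)/(2*A) * A = (A-D)/2 := by
    field_simp
  rw [sub_mul, one_mul, hmul] at hkey
  linarith

/-- Strong-convexity property of the minimizer of `⟨g,·⟩ + (β/2)‖·−y‖² + λ∑w|·|`. -/
lemma strong_min_abs {n : ℕ} (β lam : ℝ) (g yk : Vec n) (w : Fin n → ℝ)
    (hβ : 0 < β) (hlam : 0 ≤ lam) (hw : ∀ i, 0 ≤ w i) (xs : Vec n)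
    (φ : Vec n → ℝ)
    (hφdef : ∀ u, φ u = ⟪g, u⟫_ℝ + β / 2 * ‖u - yk‖ ^ 2 + lam * ∑ i, w i * |u i|)
    (hmin : ∀ z, z ≠ xs → φ xs < φ z) (z : Vec n) :
    φ xs + β / 2 * ‖z - xs‖ ^ 2 ≤ φ z := by
  by_cases hz : z = xs
  · subst hz; simp
  have hc0 : 0 < ‖z - xs‖ ^ 2 := by
    have h1 : 0 < ‖z - xs‖ := norm_pos_iff.mpr (sub_ne_zero.mpr hz)
    positivity
  have key : ∀ t : ℝ, 0 < t → t < 1 →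
      (1 - t) * (β / 2 * ‖z - xs‖ ^ 2) ≤ φ z - φ xs := by
    intro t ht0 ht1
    have ht1' : (0:ℝ) < 1 - t := by linarith
    set m : Vec n := (1 - t) • xs + t • z with hm
    have hmne : m ≠ xs := by
      rw [hm]
      intro hcon
      have h2 : t • (z - xs) = 0 := by
        have h3 : (1 - t) • xs + t • z - xs = t • (z - xs) := by module
        rw [hcon] at h3
        simpa using h3.symm
      rcases smul_eq_zero.mp h2 with h | h
      · exact ht0.ne' h
      · exact hz (sub_eq_zero.mp h)
    have hlt := hmin m hmne
    have hA : ⟪g, m⟫_ℝ = (1 - t) * ⟪g, xs⟫_ℝ + t * ⟪g, z⟫_ℝ := by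
      rw [hm, inner_add_right, real_inner_smul_right, real_inner_smul_right]
    have hB : ‖m - yk‖ ^ 2
        = (1-t) * ‖xs - yk‖^2 + t * ‖z - yk‖^2 - t * (1-t) * ‖z - xs‖^2 := by
      have h1 : m - yk = (1-t) • (xs - yk) + t • (z - yk) := by rw [hm]; module
      rw [h1, norm_combo]
      have h2 : xs - yk - (z - yk) = -(z - xs) := by abel
      rw [h2, norm_neg]
    have hCsum : ∑ i, w i * |m i|
        ≤ (1-t) * ∑ i, w i * |xs i| + t * ∑ i, w i * |z i| := by
      rw [Finset.mul_sum, Finset.mul_sum, ← Finset.sum_add_distrib]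
      apply Finset.sum_le_sum
      intro i _
      have hmi : m i = (1 - t) * xs i + t * z i := by
        rw [hm]; simp [smul_eq_mul]
      rw [hmi]
      calc w i * |(1 - t) * xs i + t * z i|
          ≤ w i * ((1 - t) * |xs i| + t * |z i|) := by
            apply mul_le_mul_of_nonneg_left _ (hw i)
            calc |(1 - t) * xs i + t * z i| ≤ |(1 - t) * xs i| + |t * z i| := abs_add_le _ _
              _ = (1 - t) * |xs i| + t * |z i| := by
                  rw [abs_mul, abs_mul, abs_of_pos ht0, abs_of_pos ht1']
        _ = (1 - t) * (w i * |xs i|) + t * (w i * |z i|) := by ring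
    have hL : lam * ∑ i, w i * |m i|
        ≤ lam * ((1-t) * ∑ i, w i * |xs i| + t * ∑ i, w i * |z i|) :=
      mul_le_mul_of_nonneg_left hCsum hlam
    have hφm : φ m ≤ φ xs + t * (φ z - φ xs - β / 2 * ((1-t) * ‖z - xs‖^2)) := by
      have expand : φ xs + t * (φ z - φ xs - β / 2 * ((1-t) * ‖z - xs‖^2))
          = ((1 - t) * ⟪g, xs⟫_ℝ + t * ⟪g, z⟫_ℝ)
            + β / 2 * ((1-t) * ‖xs - yk‖^2 + t * ‖z - yk‖^2 - t * (1-t) * ‖z - xs‖^2)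
            + lam * ((1-t) * ∑ i, w i * |xs i| + t * ∑ i, w i * |z i|) := by
        rw [hφdef xs, hφdef z]; ring
      rw [expand, hφdef m, hA, hB]
      linarith
    have hpos : 0 < t * (φ z - φ xs - β / 2 * ((1-t) * ‖z - xs‖^2)) := by linarith
    have hpos2 : 0 < φ z - φ xs - β / 2 * ((1-t) * ‖z - xs‖^2) := by
      by_contra hle
      push_neg at hle
      have := mul_nonpos_of_nonneg_of_nonpos ht0.le hle
      linarith
    linarith
  have := limit_step (by positivity : 0 < β / 2 * ‖z - xs‖ ^ 2) key
  linarith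

/-- Lemma 2.1(i): sufficient decrease of the merit function. -/
theorem stmt_0 (n : ℕ) (p lam β Lf μ αbar : ℝ) (f : Vec n → ℝ)
    (x y : ℕ → Vec n) (ε : ℕ → Fin n → ℝ) (α : ℕ → ℝ)
    (H : EIRL1 n p lam β Lf μ αbar f x y ε α) :
    ∀ k ≥ 1,
      psiObj n p lam β f (x k) (x (k - 1)) (ε k)
          - psiObj n p lam β f (x (k + 1)) (x k) (ε (k + 1))
        ≥ β / 2 * (1 - αbar ^ 2) * ‖x k - x (k - 1)‖ ^ 2 := by
  obtain ⟨hn, hp0, hp1, hlam, hμ0, hμ1, hLf, hβ, hconv, hdiff, hlip, hαbar0, hαbar1,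
    hα0, hα1, hε0, hεpos, hεdec, hy, hmin, hlevel⟩ := H
  intro K hK
  obtain ⟨k, rfl⟩ : ∃ j, K = j + 1 := ⟨K - 1, (Nat.succ_pred_eq_of_pos hK).symm⟩
  simp only [Nat.add_sub_cancel]
  have hβ0 : 0 < β := lt_of_le_of_lt hLf hβ
  have he0pos : ∀ i, 0 < ε (k+1) i := hεpos k
  have habs : ∀ i, 0 < |x (k+1) i| + ε (k+1) i :=
    fun i => add_pos_of_nonneg_of_pos (abs_nonneg _) (he0pos i)
  have hwpos : ∀ i, 0 ≤ p * (|x (k+1) i| + ε (k+1) i) ^ (p - 1) := fun i =>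
    mul_nonneg hp0.le (Real.rpow_pos_of_pos (habs i) _).le
  -- strong minimality of the subproblem solution
  have hsm := strong_min_abs β lam (gradient f (y (k+1))) (y (k+1))
      (fun i => p * (|x (k+1) i| + ε (k+1) i) ^ (p - 1)) hβ0 hlam.le hwpos (x (k+1+1))
      (subObj n p lam β f (x (k+1)) (y (k+1)) (ε (k+1))) (fun u => rfl)
      (hmin (k+1)) (x (k+1))
  simp only [subObj] at hsm
  rw [norm_sub_rev (x (k+1)) (x (k+1+1))] at hsm
  -- descent lemma
  have hdesc := descent_lemma f hdiff Lf hlip (y (k+1)) (x (k+1+1))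
  rw [inner_sub_right] at hdesc
  -- convexity lower bound
  have hconvlb := convex_lb f hdiff hconv (y (k+1)) (x (k+1))
  rw [inner_sub_right] at hconvlb
  -- concavity of t ↦ t^p
  have hsum : ∑ i, (|x (k+1+1) i| + ε (k+1+1) i) ^ p
      ≤ ∑ i, (|x (k+1) i| + ε (k+1) i) ^ p
        + (∑ i, (p * (|x (k+1) i| + ε (k+1) i) ^ (p-1)) * |x (k+1+1) i|
          - ∑ i, (p * (|x (k+1) i| + ε (k+1) i) ^ (p-1)) * |x (k+1) i|) := by
    rw [← Finset.sum_sub_distrib, ← Finset.sum_add_distrib]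
    apply Finset.sum_le_sum
    intro i _
    have hb : 0 ≤ |x (k+1+1) i| + ε (k+1+1) i :=
      add_nonneg (abs_nonneg _) (hεpos (k+1) i).le
    have htan := rpow_tangent hp0 hp1 (habs i) hb
    have hεle : ε (k+1+1) i ≤ ε (k+1) i :=
      le_trans (hεdec (k+1) i) (mul_le_of_le_one_left (he0pos i).le hμ1.le)
    have hdiff_le : |x (k+1+1) i| + ε (k+1+1) i - (|x (k+1) i| + ε (k+1) i)
        ≤ |x (k+1+1) i| - |x (k+1) i| := by linarith
    have hmono := mul_le_mul_of_nonneg_left hdiff_le (hwpos i)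
    calc (|x (k+1+1) i| + ε (k+1+1) i) ^ p
        ≤ (|x (k+1) i| + ε (k+1) i) ^ p
          + p * (|x (k+1) i| + ε (k+1) i) ^ (p-1)
            * (|x (k+1+1) i| + ε (k+1+1) i - (|x (k+1) i| + ε (k+1) i)) := htan
      _ ≤ (|x (k+1) i| + ε (k+1) i) ^ p
          + p * (|x (k+1) i| + ε (k+1) i) ^ (p-1) * (|x (k+1+1) i| - |x (k+1) i|) := by
            linarith [hmono]
      _ = (|x (k+1) i| + ε (k+1) i) ^ p
          + ((p * (|x (k+1) i| + ε (k+1) i) ^ (p-1)) * |x (k+1+1) i|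
            - (p * (|x (k+1) i| + ε (k+1) i) ^ (p-1)) * |x (k+1) i|) := by ring
  have hsum' : lam * ∑ i, (|x (k+1+1) i| + ε (k+1+1) i) ^ p
      ≤ lam * ∑ i, (|x (k+1) i| + ε (k+1) i) ^ p
        + lam * ∑ i, (p * (|x (k+1) i| + ε (k+1) i) ^ (p-1)) * |x (k+1+1) i|
        - lam * ∑ i, (p * (|x (k+1) i| + ε (k+1) i) ^ (p-1)) * |x (k+1) i| :=
    (mul_le_mul_of_nonneg_left hsum hlam.le).trans_eq (by ring)
  -- the extrapolation term
  have hyk := hy (k+1)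
  simp only [Nat.add_sub_cancel] at hyk
  have hyy : β / 2 * ‖x (k+1) - y (k+1)‖^2
      ≤ β / 2 * (αbar^2 * ‖x (k+1) - x k‖^2) := by
    have h1 : x (k+1) - y (k+1) = -(α (k+1) • (x (k+1) - x k)) := by
      rw [hyk]; module
    rw [h1, norm_neg, norm_smul]
    have h2 : (‖α (k+1)‖ * ‖x (k+1) - x k‖)^2
        = (α (k+1))^2 * ‖x (k+1) - x k‖^2 := by
      rw [Real.norm_eq_abs, mul_pow, sq_abs]
    rw [h2]
    have h3 : (α (k+1))^2 ≤ αbar^2 := pow_le_pow_left₀ (hα0 _) (hα1 _) 2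
    have h4 := mul_le_mul_of_nonneg_right h3 (pow_nonneg (norm_nonneg (x (k+1) - x k)) 2)
    have h5 := mul_le_mul_of_nonneg_left h4 (by linarith : (0:ℝ) ≤ β / 2)
    exact h5
  have hLfβ : Lf / 2 * ‖x (k+1+1) - y (k+1)‖^2 ≤ β / 2 * ‖x (k+1+1) - y (k+1)‖^2 :=
    mul_le_mul_of_nonneg_right (by linarith)
      (pow_nonneg (norm_nonneg (x (k+1+1) - y (k+1))) 2)
  simp only [psiObj, Fobj, ge_iff_le]
  linarith [hsm, hdesc, hconvlb, hsum', hyy, hLfβ]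
end
end

section
/- (Lemma 2.1(iii), vanishing steps) The successive differences vanish: lim_{k→∞} ‖x^{k+1} − x^k‖₂ = 0. -/
open Filter
open scoped BigOperators InnerProductSpace

noncomputable section

lemma my_hasDerivAt_line {n : ℕ} {f : Vec n → ℝ} (hf : ContDiff ℝ 1 f) (a v : Vec n) (t : ℝ) :
    HasDerivAt (fun s : ℝ => f (a + s • v)) ⟪gradient f (a + t • v), v⟫_ℝ t := by
  have hd : DifferentiableAt ℝ f (a + t • v) := (hf.differentiable one_ne_zero) _
  have h1 : HasFDerivAt f (InnerProductSpace.toDual ℝ (Vec n) (gradient f (a + t • v)))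
      (a + t • v) := hd.hasGradientAt.hasFDerivAt
  have h2 : HasDerivAt (fun s : ℝ => a + s • v) v t := by
    simpa using ((hasDerivAt_id t).smul_const v).const_add a
  exact h1.comp_hasDerivAt t h2

lemma my_grad_lower {n : ℕ} {f : Vec n → ℝ} (hconv : ConvexOn ℝ Set.univ f)
    (hf : ContDiff ℝ 1 f) (a b : Vec n) :
    f a + ⟪gradient f a, b - a⟫_ℝ ≤ f b := by
  have hφ : ConvexOn ℝ Set.univ (fun t : ℝ => f (a + t • (b - a))) := by
    have h := hconv.comp_affineMap (AffineMap.lineMap a b)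
    simp only [Set.preimage_univ] at h
    have he : (fun t : ℝ => f (a + t • (b - a))) = f ∘ (AffineMap.lineMap a b) := by
      funext t
      simp only [Function.comp_apply, AffineMap.lineMap_apply_module]
      rw [add_comm]
      congr 1
      module
    rw [he]; exact h
  have hder : HasDerivAt (fun t : ℝ => f (a + t • (b - a))) ⟪gradient f a, b - a⟫_ℝ 0 := by
    have := my_hasDerivAt_line hf a (b - a) 0
    simpa only [zero_smul, add_zero] using this
  have h2 := hφ.le_slope_of_hasDerivAt (Set.mem_univ (0:ℝ)) (Set.mem_univ (1:ℝ)) one_pos hder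
  rw [slope_def_field] at h2
  simp only [one_smul, zero_smul, add_zero, sub_zero, div_one] at h2
  have hab : a + (b - a) = b := by abel
  rw [hab] at h2
  linarith

lemma my_descent {n : ℕ} {f : Vec n → ℝ} (hf : ContDiff ℝ 1 f) {Lf : ℝ} (hLf : 0 ≤ Lf)
    (hlip : ∀ a b, ‖gradient f a - gradient f b‖ ≤ Lf * ‖a - b‖) (a b : Vec n) :
    f b ≤ f a + ⟪gradient f a, b - a⟫_ℝ + Lf / 2 * ‖b - a‖ ^ 2 := by
  set v := b - a with hv
  have hgc : Continuous (gradient f) := by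
    have h1 : Continuous (fderiv ℝ f) := hf.continuous_fderiv one_ne_zero
    exact (InnerProductSpace.toDual ℝ (Vec n)).symm.continuous.comp h1
  set φ' : ℝ → ℝ := fun t => ⟪gradient f (a + t • v), v⟫_ℝ with hφ'
  have hder : ∀ t ∈ Set.uIcc (0:ℝ) 1, HasDerivAt (fun s : ℝ => f (a + s • v)) (φ' t) t :=
    fun t _ => my_hasDerivAt_line hf a v t
  have hcontφ : Continuous φ' := by
    apply Continuous.inner
    · exact hgc.comp (by continuity)
    · exact continuous_const
  have hint : IntervalIntegrable φ' MeasureTheory.volume 0 1 := hcontφ.intervalIntegrable 0 1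
  have hftc := intervalIntegral.integral_eq_sub_of_hasDerivAt hder hint
  simp only [one_smul, zero_smul, add_zero] at hftc
  have hab : a + v = b := by rw [hv]; abel
  rw [hab] at hftc
  -- bound the integrand
  have hbound : ∀ t ∈ Set.Icc (0:ℝ) 1, φ' t ≤ φ' 0 + Lf * ‖v‖ ^ 2 * t := by
    intro t ht
    have h1 : φ' t - φ' 0 = ⟪gradient f (a + t • v) - gradient f a, v⟫_ℝ := by
      rw [hφ']; simp only [zero_smul, add_zero, inner_sub_left]
    have h2 : ⟪gradient f (a + t • v) - gradient f a, v⟫_ℝ ≤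
        ‖gradient f (a + t • v) - gradient f a‖ * ‖v‖ := real_inner_le_norm _ _
    have h3 : ‖gradient f (a + t • v) - gradient f a‖ ≤ Lf * ‖a + t • v - a‖ := hlip _ _
    have h4 : ‖a + t • v - a‖ = t * ‖v‖ := by
      simp [norm_smul, abs_of_nonneg ht.1]
    rw [h4] at h3
    have h5 := mul_le_mul_of_nonneg_right h3 (norm_nonneg v)
    nlinarith [h1, h2, h5]
  have hintc : IntervalIntegrable (fun t : ℝ => φ' 0 + Lf * ‖v‖ ^ 2 * t)
      MeasureTheory.volume 0 1 :=
    (continuous_const.add (continuous_const.mul continuous_id)).intervalIntegrable 0 1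
  have hmono : ∫ t in (0:ℝ)..1, φ' t ≤ ∫ t in (0:ℝ)..1, (φ' 0 + Lf * ‖v‖ ^ 2 * t) :=
    intervalIntegral.integral_mono_on zero_le_one hint hintc hbound
  have hrhs : ∫ t in (0:ℝ)..1, (φ' 0 + Lf * ‖v‖ ^ 2 * t) = φ' 0 + Lf / 2 * ‖v‖ ^ 2 := by
    have hi2 : IntervalIntegrable (fun t : ℝ => Lf * ‖v‖ ^ 2 * t) MeasureTheory.volume 0 1 := by
      apply Continuous.intervalIntegrable
      exact continuous_const.mul continuous_id'
    rw [intervalIntegral.integral_add intervalIntegrable_const hi2]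
    rw [intervalIntegral.integral_const_mul, integral_id]
    simp
    ring
  have hφ0 : φ' 0 = ⟪gradient f a, b - a⟫_ℝ := by
    rw [hφ']; simp only [zero_smul, add_zero]; rw [hv]
  rw [hrhs, hφ0] at hmono
  rw [hftc] at hmono
  linarith

lemma my_rpow_tangent {p a b : ℝ} (hp0 : 0 < p) (hp1 : p < 1) (ha : 0 < a) (hb : 0 ≤ b) :
    b ^ p ≤ a ^ p + p * a ^ (p - 1) * (b - a) := by
  have hs : -1 ≤ (b - a) / a := by
    rw [le_div_iff₀ ha]; linarith
  have hber := rpow_one_add_le_one_add_mul_self hs hp0.le hp1.le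
  have hb' : b = a * (1 + (b - a) / a) := by field_simp; ring
  have h1 : b ^ p = a ^ p * (1 + (b - a) / a) ^ p := by
    rw [← Real.mul_rpow ha.le (by linarith [hs] : (0:ℝ) ≤ 1 + (b - a) / a), ← hb']
  have hap : 0 < a ^ p := Real.rpow_pos_of_pos ha p
  have h2 : b ^ p ≤ a ^ p * (1 + p * ((b - a) / a)) := by
    rw [h1]; exact mul_le_mul_of_nonneg_left hber hap.le
  have h3 : a ^ p * (1 + p * ((b - a) / a)) = a ^ p + p * a ^ (p - 1) * (b - a) := by
    have hsub : a ^ (p - 1) = a ^ p / a := by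
      rw [Real.rpow_sub ha, Real.rpow_one]
    rw [hsub]; field_simp
  linarith [h3 ▸ h2]

lemma my_norm_combo_sq {n : ℕ} (u w : Vec n) (t : ℝ) :
    ‖(1 - t) • u + t • w‖ ^ 2
      = (1 - t) * ‖u‖ ^ 2 + t * ‖w‖ ^ 2 - t * (1 - t) * ‖u - w‖ ^ 2 := by
  simp only [← real_inner_self_eq_norm_sq]
  simp only [inner_add_left, inner_add_right, inner_sub_left, inner_sub_right,
    real_inner_smul_left, real_inner_smul_right]
  ring

lemma my_strong_min {n : ℕ} {g y m : Vec n} {β lam : ℝ} {w : Fin n → ℝ} (hβ : 0 < β)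
    (hlam : 0 ≤ lam) (hw : ∀ i, 0 ≤ w i)
    (S : Vec n → ℝ)
    (hS : ∀ z, S z = ⟪g, z⟫_ℝ + β / 2 * ‖z - y‖ ^ 2 + lam * ∑ i, w i * |z i|)
    (hmin : ∀ z, z ≠ m → S m < S z) (z : Vec n) :
    S m + β / 2 * ‖z - m‖ ^ 2 ≤ S z := by
  rcases eq_or_ne z m with rfl | hne
  · simp
  have key : ∀ t : ℝ, 0 < t → t < 1 → β / 2 * (1 - t) * ‖z - m‖ ^ 2 ≤ S z - S m := by
    intro t ht0 ht1
    set u : Vec n := (1 - t) • m + t • z with hu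
    have hum : u ≠ m := by
      intro hc
      apply hne
      have h2 : t • z = t • m := by
        have h3 : (1 - t) • m + t • z - (1 - t) • m = m - (1 - t) • m := by rw [← hu, hc]
        simp only [add_sub_cancel_left] at h3
        rw [h3, sub_smul, one_smul]
        abel
      exact smul_right_injective (Vec n) (ne_of_gt ht0) h2
    have hconv : S u ≤ (1 - t) * S m + t * S z - β / 2 * t * (1 - t) * ‖m - z‖ ^ 2 := by
      have he : u - y = (1 - t) • (m - y) + t • (z - y) := by
        rw [hu, smul_sub, smul_sub]
        module
      have hquad : ‖u - y‖ ^ 2 = (1 - t) * ‖m - y‖ ^ 2 + t * ‖z - y‖ ^ 2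
          - t * (1 - t) * ‖m - z‖ ^ 2 := by
        rw [he, my_norm_combo_sq]
        have : (m - y) - (z - y) = m - z := by abel
        rw [this]
      have hlin : ⟪g, u⟫_ℝ = (1 - t) * ⟪g, m⟫_ℝ + t * ⟪g, z⟫_ℝ := by
        rw [hu, inner_add_right, real_inner_smul_right, real_inner_smul_right]
      have habs : ∑ i, w i * |u i| ≤ (1-t) * ∑ i, w i * |m i| + t * ∑ i, w i * |z i| := by
        have hterm : ∀ i, w i * |u i| ≤ (1-t) * (w i * |m i|) + t * (w i * |z i|) := by
          intro i
          have hui : u i = (1 - t) * m i + t * z i := by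
            rw [hu]
            simp [PiLp.add_apply, PiLp.smul_apply, smul_eq_mul]
          have h1 : |u i| ≤ (1 - t) * |m i| + t * |z i| := by
            rw [hui]
            calc |(1 - t) * m i + t * z i| ≤ |(1 - t) * m i| + |t * z i| := abs_add_le _ _
              _ = (1 - t) * |m i| + t * |z i| := by
                  rw [abs_mul, abs_mul, abs_of_nonneg (by linarith : (0:ℝ) ≤ 1 - t),
                    abs_of_nonneg ht0.le]
          nlinarith [hw i, h1]
        calc ∑ i, w i * |u i| ≤ ∑ i, ((1-t) * (w i * |m i|) + t * (w i * |z i|)) :=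
              Finset.sum_le_sum (fun i _ => hterm i)
          _ = (1-t) * ∑ i, w i * |m i| + t * ∑ i, w i * |z i| := by
              rw [Finset.sum_add_distrib, Finset.mul_sum, Finset.mul_sum]
      have hlabs := mul_le_mul_of_nonneg_left habs hlam
      rw [hS u, hS m, hS z, hquad, hlin]
      nlinarith [hlabs]
    have hmle : S m ≤ S u := (hmin u hum).le
    have hrev : ‖m - z‖ = ‖z - m‖ := norm_sub_rev m z
    rw [hrev] at hconv
    nlinarith [hconv, hmle]
  have h0 : Tendsto (fun j : ℕ => 1 / ((j:ℝ) + 1 + 1)) atTop (nhds 0) := by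
    have := (tendsto_one_div_add_atTop_nhds_zero_nat (𝕜 := ℝ)).comp (tendsto_add_atTop_nat 1)
    convert this using 2 with j
    simp [Function.comp]
  have h2 : Tendsto (fun j : ℕ => β / 2 * (1 - 1 / ((j:ℝ) + 1 + 1)) * ‖z - m‖ ^ 2) atTop
      (nhds (β / 2 * (1 - 0) * ‖z - m‖ ^ 2)) :=
    ((h0.const_sub 1).const_mul (β / 2)).mul_const _
  have h3 : β / 2 * (1 - 0) * ‖z - m‖ ^ 2 ≤ S z - S m := by
    apply le_of_tendsto h2
    apply Filter.Eventually.of_forall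
    intro j
    apply key
    · positivity
    · rw [div_lt_one (by positivity)]
      have : (0:ℝ) ≤ (j:ℝ) := Nat.cast_nonneg j
      linarith
  linarith
lemma my_eps_pos {n : ℕ} {p lam β Lf μ αbar : ℝ} {f : Vec n → ℝ}
    {x y : ℕ → Vec n} {ε : ℕ → Fin n → ℝ} {α : ℕ → ℝ}
    (H : EIRL1 n p lam β Lf μ αbar f x y ε α) : ∀ k i, 0 < ε k i := by
  intro k i
  cases k with
  | zero => exact H.hε0 i
  | succ m => exact H.hεpos m i

lemma my_step {n : ℕ} {p lam β Lf μ αbar : ℝ} {f : Vec n → ℝ}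
    {x y : ℕ → Vec n} {ε : ℕ → Fin n → ℝ} {α : ℕ → ℝ}
    (H : EIRL1 n p lam β Lf μ αbar f x y ε α) (k : ℕ) :
    Fobj n p lam f (x (k+1)) (ε (k+1)) + β / 2 * ‖x (k+1) - x k‖ ^ 2 ≤
      Fobj n p lam f (x k) (ε k) + β / 2 * (αbar ^ 2 * ‖x k - x (k-1)‖ ^ 2) := by
  have hεk := my_eps_pos H
  have hβ0 : 0 < β := lt_of_le_of_lt H.hLf H.hβ
  have hw : ∀ i, 0 ≤ p * (|x k i| + ε k i) ^ (p - 1) := fun i =>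
    mul_nonneg H.hp0.le
      (Real.rpow_nonneg (add_nonneg (abs_nonneg _) (hεk k i).le) _)
  have hI := my_strong_min hβ0 H.hlam.le hw
    (subObj n p lam β f (x k) (y k) (ε k)) (fun z => rfl)
    (fun z hz => H.hmin k z hz) (x k)
  have hII := my_descent H.hdiff H.hLf H.hlip (y k) (x (k+1))
  have hIII := my_grad_lower H.hconv H.hdiff (y k) (x k)
  have hIV : ∑ i, (|x (k+1) i| + ε (k+1) i) ^ p ≤
      ∑ i, (|x k i| + ε k i) ^ p
        + (∑ i, (p * (|x k i| + ε k i) ^ (p-1)) * |x (k+1) i|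
           - ∑ i, (p * (|x k i| + ε k i) ^ (p-1)) * |x k i|) := by
    rw [← Finset.sum_sub_distrib, ← Finset.sum_add_distrib]
    apply Finset.sum_le_sum
    intro i _
    have ha : 0 < |x k i| + ε k i := add_pos_of_nonneg_of_pos (abs_nonneg _) (hεk k i)
    have hb : 0 ≤ |x (k+1) i| + ε (k+1) i := add_nonneg (abs_nonneg _) (hεk (k+1) i).le
    have ht := my_rpow_tangent H.hp0 H.hp1 ha hb
    have hε : ε (k+1) i ≤ ε k i :=
      le_trans (H.hεdec k i) (by nlinarith [hεk k i, H.hμ1, H.hμ0])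
    nlinarith [ht, mul_nonneg (hw i) (sub_nonneg.2 hε)]
  have hlIV := mul_le_mul_of_nonneg_left hIV H.hlam.le
  have hxy : ‖x k - y k‖ ^ 2 ≤ αbar ^ 2 * ‖x k - x (k-1)‖ ^ 2 := by
    have h1 : x k - y k = -(α k • (x k - x (k-1))) := by
      rw [H.hy k, sub_add_eq_sub_sub, sub_self, zero_sub]
    have h2 : ‖x k - y k‖ = α k * ‖x k - x (k-1)‖ := by
      rw [h1, norm_neg, norm_smul, Real.norm_eq_abs, abs_of_nonneg (H.hα0 k)]
    have h3 : α k * ‖x k - x (k-1)‖ ≤ αbar * ‖x k - x (k-1)‖ :=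
      mul_le_mul_of_nonneg_right (H.hα1 k) (norm_nonneg _)
    have h4 : 0 ≤ α k * ‖x k - x (k-1)‖ := mul_nonneg (H.hα0 k) (norm_nonneg _)
    calc ‖x k - y k‖ ^ 2 = (α k * ‖x k - x (k-1)‖) ^ 2 := by rw [h2]
      _ ≤ (αbar * ‖x k - x (k-1)‖) ^ 2 := by exact pow_le_pow_left₀ h4 h3 2
      _ = αbar ^ 2 * ‖x k - x (k-1)‖ ^ 2 := by rw [mul_pow]
  have hxyβ := mul_le_mul_of_nonneg_left hxy (by positivity : (0:ℝ) ≤ β / 2)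
  have hrev : ‖x k - x (k+1)‖ = ‖x (k+1) - x k‖ := norm_sub_rev _ _
  simp only [subObj] at hI
  rw [hrev] at hI
  rw [inner_sub_right] at hII hIII
  have hQ : Lf / 2 * ‖x (k+1) - y k‖ ^ 2 ≤ β / 2 * ‖x (k+1) - y k‖ ^ 2 :=
    mul_le_mul_of_nonneg_right (by linarith [H.hβ]) (sq_nonneg _)
  simp only [Fobj]
  linarith [hI, hII, hIII, hlIV, hxyβ, hQ]

/-- Lemma 2.1(iii): the successive differences vanish. -/
theorem stmt_2 (n : ℕ) (p lam β Lf μ αbar : ℝ) (f : Vec n → ℝ)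
    (x y : ℕ → Vec n) (ε : ℕ → Fin n → ℝ) (α : ℕ → ℝ)
    (H : EIRL1 n p lam β Lf μ αbar f x y ε α) :
    Tendsto (fun k => ‖x (k + 1) - x k‖) atTop (nhds 0) := by
  have hεk := my_eps_pos H
  have hβ0 : 0 < β := lt_of_le_of_lt H.hLf H.hβ
  set Hs : ℕ → ℝ := fun k => Fobj n p lam f (x k) (ε k) + β / 2 * ‖x k - x (k-1)‖ ^ 2 with hHs
  set d : ℕ → ℝ := fun k => ‖x k - x (k-1)‖ ^ 2 with hd
  set δ : ℝ := β / 2 * (1 - αbar ^ 2) with hδ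
  have hδ0 : 0 < δ := by
    have : αbar ^ 2 < 1 := by nlinarith [H.hαbar0, H.hαbar1]
    rw [hδ]; nlinarith
  have hstep : ∀ k, Hs (k+1) + δ * d k ≤ Hs k := by
    intro k
    have hms := my_step H k
    have hk1 : (k + 1 : ℕ) - 1 = k := rfl
    simp only [hHs, hd, hk1, hδ]
    nlinarith [hms]
  have hd0 : ∀ k, 0 ≤ d k := fun k => sq_nonneg _
  have hmono : ∀ k, Hs (k+1) ≤ Hs k := fun k => by nlinarith [hstep k, hd0 k, hδ0]
  have hHsle : ∀ k, Hs k ≤ Hs 0 := by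
    intro k
    induction k with
    | zero => exact le_refl _
    | succ m ih => exact le_trans (hmono m) ih
  have hHs0 : Hs 0 = Fobj n p lam f (x 0) (ε 0) := by
    simp [hHs]
  have hpen : ∀ k, f (x k) ≤ Fobj n p lam f (x k) (ε k) := by
    intro k
    have h1 : 0 ≤ ∑ i, (|x k i| + ε k i) ^ p := by
      apply Finset.sum_nonneg
      intro i _
      exact Real.rpow_nonneg (add_nonneg (abs_nonneg _) (hεk k i).le) _
    simp only [Fobj]
    nlinarith [H.hlam, h1]
  have hmem : ∀ k, x k ∈ {z : Vec n | Fobj n p lam f z 0 ≤ Fobj n p lam f (x 0) (ε 0)} := by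
    intro k
    have h1 : Fobj n p lam f (x k) 0 ≤ Fobj n p lam f (x k) (ε k) := by
      simp only [Fobj]
      have h2 : ∑ i, (|x k i| + (0:ℝ)) ^ p ≤ ∑ i, (|x k i| + ε k i) ^ p := by
        apply Finset.sum_le_sum
        intro i _
        exact Real.rpow_le_rpow (by positivity) (by linarith [hεk k i]) H.hp0.le
      have h2' := mul_le_mul_of_nonneg_left h2 H.hlam.le
      have hz : ∀ i, (|x k i| + (0:ℝ)) = |x k i| := fun i => add_zero _
      simp only [Pi.zero_apply]
      linarith [h2']
    have h3 : Fobj n p lam f (x k) (ε k) ≤ Hs k := by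
      simp only [hHs]; nlinarith [sq_nonneg ‖x k - x (k-1)‖, hβ0]
    have := le_trans h1 (le_trans h3 (le_trans (hHsle k) (le_of_eq hHs0)))
    simpa using this
  obtain ⟨M, hM⟩ : ∃ M, ∀ k, M ≤ Hs k := by
    have hcl : IsCompact
        (closure {z : Vec n | Fobj n p lam f z 0 ≤ Fobj n p lam f (x 0) (ε 0)}) :=
      Metric.isCompact_of_isClosed_isBounded isClosed_closure H.hlevel.closure
    have hne : (closure {z : Vec n | Fobj n p lam f z 0
        ≤ Fobj n p lam f (x 0) (ε 0)}).Nonempty := ⟨x 0, subset_closure (hmem 0)⟩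
    obtain ⟨zmin, _, hzmin⟩ := hcl.exists_isMinOn hne (H.hdiff.continuous.continuousOn)
    refine ⟨f zmin, fun k => ?_⟩
    have h1 : f zmin ≤ f (x k) := hzmin (subset_closure (hmem k))
    have h2 : Fobj n p lam f (x k) (ε k) ≤ Hs k := by
      simp only [hHs]; nlinarith [sq_nonneg ‖x k - x (k-1)‖, hβ0]
    linarith [hpen k]
  have hsum : ∀ N, ∑ k ∈ Finset.range N, δ * d k ≤ Hs 0 - M := by
    intro N
    have htel : ∑ k ∈ Finset.range N, δ * d k ≤ Hs 0 - Hs N := by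
      induction N with
      | zero => simp
      | succ m ih =>
        rw [Finset.sum_range_succ]
        have := hstep m
        linarith
    linarith [htel, hM N]
  have hsummable : Summable (fun k => δ * d k) :=
    summable_of_sum_range_le (fun k => mul_nonneg hδ0.le (hd0 k)) hsum
  have hdz : Tendsto (fun k => δ * d k) atTop (nhds 0) := hsummable.tendsto_atTop_zero
  have hdz2 : Tendsto d atTop (nhds 0) := by
    have h := hdz.const_mul (1/δ)
    simp only [mul_zero] at h
    have he : (fun k => 1/δ * (δ * d k)) = d := by
      funext k
      field_simp
    rwa [he] at h
  have hdz3 : Tendsto (fun k => d (k+1)) atTop (nhds 0) :=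
    hdz2.comp (tendsto_add_atTop_nat 1)
  have hdz4 : Tendsto (fun k => ‖x (k+1) - x k‖ ^ 2) atTop (nhds 0) := by
    have he : (fun k => ‖x (k+1) - x k‖ ^ 2) = fun k => d (k+1) := by
      funext k
      simp only [hd, Nat.add_sub_cancel]
    rw [he]
    exact hdz3
  have hroot := (Real.continuous_sqrt.tendsto 0).comp hdz4
  simp only [Real.sqrt_zero] at hroot
  convert hroot using 2 with k
  simp [Function.comp, Real.sqrt_sq (norm_nonneg _)]
end
end

section
/- (Lemma 2.1(iv), extrapolation gap vanishes) Both lim_{k→∞} ‖y^k − x^k‖₂ = 0 and lim_{k→∞} ‖y^{k−1} − x^k‖₂ = 0. -/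
open Filter
open scoped BigOperators InnerProductSpace

noncomputable section

section Aux

open Set

lemma aux_rpow_tangent {p s t : ℝ} (hp0 : 0 < p) (hp1 : p < 1) (hs : 0 < s) (ht : 0 ≤ t) :
    t ^ p ≤ s ^ p + p * s ^ (p - 1) * (t - s) := by
  have hconc := Real.strictConcaveOn_rpow hp0 hp1
  have hder : HasDerivAt (fun x : ℝ => x ^ p) (p * s ^ (p - 1)) s := by
    simpa [mul_comm] using Real.hasDerivAt_rpow_const (p := p) (Or.inl hs.ne')
  rcases lt_trichotomy t s with h | h | h
  · have := hconc.concaveOn.le_slope_of_hasDerivAt (mem_Ici.2 ht) (mem_Ici.2 hs.le) h hder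
    rw [slope_def_field] at this
    have hd : 0 < s - t := by linarith
    rw [le_div_iff₀ hd] at this
    nlinarith [this]
  · subst h; simp
  · have := hconc.concaveOn.slope_le_of_hasDerivAt (mem_Ici.2 hs.le) (mem_Ici.2 ht) h hder
    rw [slope_def_field] at this
    have hd : 0 < t - s := by linarith
    rw [div_le_iff₀ hd] at this
    nlinarith [this]

variable {n : ℕ} {f : Vec n → ℝ} {Lf : ℝ}

lemma aux_curve_deriv (hdiff : ContDiff ℝ 1 f) (a v : Vec n) (t : ℝ) :
    HasDerivAt (fun s : ℝ => f (a + s • v)) ⟪gradient f (a + t • v), v⟫_ℝ t := by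
  have hdf : DifferentiableAt ℝ f (a + t • v) := (hdiff.differentiable one_ne_zero) _
  have hg := hdf.hasGradientAt
  rw [hasGradientAt_iff_hasFDerivAt] at hg
  have hc : HasDerivAt (fun s : ℝ => a + s • v) v t := by
    simpa using (hasDerivAt_id t).smul_const v |>.const_add a
  have := hg.comp_hasDerivAt t hc
  simpa [InnerProductSpace.toDual, Function.comp_def] using this

lemma aux_conv_tangent (hdiff : ContDiff ℝ 1 f) (hconv : ConvexOn ℝ Set.univ f) (a b : Vec n) :
    f a + ⟪gradient f a, b - a⟫_ℝ ≤ f b := by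
  rcases eq_or_ne b a with rfl | hne
  · simp
  · have hg : ConvexOn ℝ Set.univ (fun t : ℝ => f (a + t • (b - a))) := by
      have := hconv.comp_affineMap (AffineMap.lineMap a b)
      have he : (fun t : ℝ => f (a + t • (b - a))) = f ∘ (AffineMap.lineMap a b) := by
        funext t; simp [AffineMap.lineMap_apply]
        congr 1
        module
      rw [he]
      simpa using this
    have hd := aux_curve_deriv hdiff a (b - a) 0
    have h0 : a + (0:ℝ) • (b - a) = a := by simp
    have h1 : a + (1:ℝ) • (b - a) = b := by simp
    rw [h0] at hd
    have hsl := hg.le_slope_of_hasDerivAt (mem_univ (0:ℝ)) (mem_univ (1:ℝ)) one_pos hd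
    rw [slope_def_field, h1] at hsl
    rw [h0] at hsl
    simp only [sub_zero, div_one] at hsl
    linarith

lemma aux_descent (hdiff : ContDiff ℝ 1 f)
    (hlip : ∀ a b, ‖gradient f a - gradient f b‖ ≤ Lf * ‖a - b‖) (a b : Vec n) :
    f b ≤ f a + ⟪gradient f a, b - a⟫_ℝ + Lf / 2 * ‖b - a‖ ^ 2 := by
  set v := b - a with hv
  set ψ : ℝ → ℝ := fun t => f (a + t • v) - t * ⟪gradient f a, v⟫_ℝ - Lf / 2 * t ^ 2 * ‖v‖ ^ 2
    with hψ
  have hder : ∀ t : ℝ, HasDerivAt ψ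
      (⟪gradient f (a + t • v), v⟫_ℝ - ⟪gradient f a, v⟫_ℝ - Lf * t * ‖v‖ ^ 2) t := by
    intro t
    have h1 := aux_curve_deriv hdiff a v t
    have h2 : HasDerivAt (fun t : ℝ => t * ⟪gradient f a, v⟫_ℝ) ⟪gradient f a, v⟫_ℝ t := by
      simpa using (hasDerivAt_id t).mul_const ⟪gradient f a, v⟫_ℝ
    have h3 : HasDerivAt (fun t : ℝ => Lf / 2 * t ^ 2 * ‖v‖ ^ 2) (Lf * t * ‖v‖ ^ 2) t := by
      have hp : HasDerivAt (fun t : ℝ => t ^ 2) (2 * t) t := by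
        simpa using hasDerivAt_pow 2 t
      have := (hp.const_mul (Lf / 2)).mul_const (‖v‖ ^ 2)
      rw [show Lf * t * ‖v‖ ^ 2 = Lf / 2 * (2 * t) * ‖v‖ ^ 2 by ring]
      exact this
    exact (h1.sub h2).sub h3
  have hmono : AntitoneOn ψ (Icc (0:ℝ) 1) := by
    apply antitoneOn_of_deriv_nonpos (convex_Icc 0 1)
    · exact (fun t _ => (hder t).differentiableAt.continuousAt.continuousWithinAt)
    · intro t _; exact ((hder t).differentiableAt).differentiableWithinAt
    · intro t ht
      rw [interior_Icc] at ht
      rw [(hder t).deriv]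
      have hb : ⟪gradient f (a + t • v) - gradient f a, v⟫_ℝ ≤ Lf * t * ‖v‖ ^ 2 := by
        calc ⟪gradient f (a + t • v) - gradient f a, v⟫_ℝ
            ≤ ‖gradient f (a + t • v) - gradient f a‖ * ‖v‖ := real_inner_le_norm _ _
          _ ≤ (Lf * ‖(a + t • v) - a‖) * ‖v‖ :=
              mul_le_mul_of_nonneg_right (hlip (a + t • v) a) (norm_nonneg _)
          _ = Lf * t * ‖v‖ ^ 2 := by
              rw [add_sub_cancel_left, norm_smul, Real.norm_eq_abs, abs_of_pos ht.1]
              ring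
      rw [inner_sub_left] at hb
      linarith
  have h01 := hmono (left_mem_Icc.2 zero_le_one) (right_mem_Icc.2 zero_le_one) zero_le_one
  simp only [hψ] at h01
  simp only [zero_smul, add_zero, one_smul, zero_mul, one_mul, zero_pow, one_pow] at h01
  have hb : a + v = b := by simp [hv]
  rw [hb] at h01
  nlinarith [h01]

lemma aux_strong_min {h : Vec n → ℝ} (hh : ConvexOn ℝ Set.univ h) {β : ℝ} (hβ : 0 < β)
    (Y xs : Vec n)
    (hmin : ∀ z, h xs + β / 2 * ‖xs - Y‖ ^ 2 ≤ h z + β / 2 * ‖z - Y‖ ^ 2) (z : Vec n) :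
    h xs + β / 2 * ‖xs - Y‖ ^ 2 + β / 2 * ‖z - xs‖ ^ 2 ≤ h z + β / 2 * ‖z - Y‖ ^ 2 := by
  obtain ⟨φ, hφ⟩ : ∃ φ' : Vec n → ℝ,
      φ' = fun w => h w + β / 2 * ‖w - Y‖ ^ 2 - β / 2 * ‖w - xs‖ ^ 2 := ⟨_, rfl⟩
  have hA : ‖xs - xs‖ ^ 2 = (0:ℝ) := by simp
  have hkey : ∀ w : Vec n, β / 2 * ‖w - Y‖ ^ 2 - β / 2 * ‖w - xs‖ ^ 2
      = β * ⟪w, xs - Y⟫_ℝ + (β / 2 * ‖Y‖ ^ 2 - β / 2 * ‖xs‖ ^ 2) := by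
    intro w
    have e1 : ‖w - Y‖ ^ 2 = ‖w‖ ^ 2 - 2 * ⟪w, Y⟫_ℝ + ‖Y‖ ^ 2 := norm_sub_sq_real w Y
    have e2 : ‖w - xs‖ ^ 2 = ‖w‖ ^ 2 - 2 * ⟪w, xs⟫_ℝ + ‖xs‖ ^ 2 := norm_sub_sq_real w xs
    rw [e1, e2, inner_sub_right]
    ring
  have hφconv : ConvexOn ℝ Set.univ φ := by
    have heq : φ = fun w => h w + (β * ⟪w, xs - Y⟫_ℝ + (β / 2 * ‖Y‖ ^ 2 - β / 2 * ‖xs‖ ^ 2)) := by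
      funext w; simp only [hφ]; rw [← hkey w]; ring
    rw [heq]
    apply hh.add
    refine ⟨convex_univ, ?_⟩
    intro u _ v _ a b ha hb hab
    dsimp only
    rw [inner_add_left, real_inner_smul_left, real_inner_smul_left]
    simp only [smul_eq_mul]
    apply le_of_eq
    linear_combination (-(β / 2 * ‖Y‖ ^ 2 - β / 2 * ‖xs‖ ^ 2)) * hab
  have hgxs : φ xs = h xs + β / 2 * ‖xs - Y‖ ^ 2 := by
    simp only [hφ]; rw [hA]; ring
  have hφmin : φ xs ≤ φ z := by
    by_contra hc
    push_neg at hc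
    have hΔpos : 0 < φ xs - φ z := by linarith
    have hzne : z ≠ xs := by
      intro h'; rw [h'] at hc; exact lt_irrefl _ hc
    have hR : 0 < ‖z - xs‖ ^ 2 := by
      have h' : 0 < ‖z - xs‖ := by
        rw [norm_pos_iff]; exact sub_ne_zero.2 hzne
      positivity
    obtain ⟨t, ht0, ht1, htb⟩ : ∃ t : ℝ, 0 < t ∧ t ≤ 1 ∧
        t * (β * ‖z - xs‖ ^ 2) ≤ φ xs - φ z := by
      refine ⟨min 1 ((φ xs - φ z) / (β * ‖z - xs‖ ^ 2)),
        lt_min one_pos (div_pos hΔpos (mul_pos hβ hR)), min_le_left _ _, ?_⟩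
      exact (le_div_iff₀ (mul_pos hβ hR)).1 (min_le_right 1 _)
    have hconvφ := hφconv.2 (mem_univ xs) (mem_univ z) (by linarith : (0:ℝ) ≤ 1 - t) ht0.le
      (by ring)
    have h1 : φ ((1 - t) • xs + t • z) ≤ (1 - t) * φ xs + t * φ z := by
      simpa [smul_eq_mul] using hconvφ
    have hnorm : ‖((1 - t) • xs + t • z) - xs‖ ^ 2 = t ^ 2 * ‖z - xs‖ ^ 2 := by
      have he : ((1 - t) • xs + t • z) - xs = t • (z - xs) := by module
      rw [he, norm_smul, Real.norm_eq_abs, abs_of_pos ht0, mul_pow]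
    have hgzt : h ((1 - t) • xs + t • z) + β / 2 * ‖((1 - t) • xs + t • z) - Y‖ ^ 2
        = φ ((1 - t) • xs + t • z) + β / 2 * ‖((1 - t) • xs + t • z) - xs‖ ^ 2 := by
      simp only [hφ]; ring
    have htb2 : t * (t * (β * ‖z - xs‖ ^ 2)) ≤ t * (φ xs - φ z) :=
      mul_le_mul_of_nonneg_left htb ht0.le
    have hlt : h ((1 - t) • xs + t • z) + β / 2 * ‖((1 - t) • xs + t • z) - Y‖ ^ 2
        < h xs + β / 2 * ‖xs - Y‖ ^ 2 := by
      rw [hgzt, hnorm, ← hgxs]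
      nlinarith [h1, htb2, mul_pos ht0 hΔpos]
    exact absurd (hmin _) (not_le.2 hlt)
  have hz' : h z + β / 2 * ‖z - Y‖ ^ 2 = φ z + β / 2 * ‖z - xs‖ ^ 2 := by
    simp only [hφ]; ring
  rw [hz', ← hgxs]
  linarith [hφmin]

end Aux

section Step

variable {n : ℕ} {p lam β Lf μ αbar : ℝ} {f : Vec n → ℝ}
  {x y : ℕ → Vec n} {ε : ℕ → Fin n → ℝ} {α : ℕ → ℝ}

lemma eirl1_eps_pos (H : EIRL1 n p lam β Lf μ αbar f x y ε α) : ∀ k i, 0 < ε k i := by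
  intro k i
  cases k with
  | zero => exact H.hε0 i
  | succ k => exact H.hεpos k i

lemma eirl1_step (H : EIRL1 n p lam β Lf μ αbar f x y ε α) (k : ℕ) :
    Fobj n p lam f (x (k + 1)) (ε (k + 1)) + β / 2 * ‖x (k + 1) - x k‖ ^ 2
      ≤ Fobj n p lam f (x k) (ε k) + β / 2 * ‖x k - y k‖ ^ 2 := by
  have hβpos : 0 < β := lt_of_le_of_lt H.hLf H.hβ
  obtain ⟨hfun, hfundef⟩ : ∃ h' : Vec n → ℝ, h' = fun z =>
      ⟪gradient f (y k), z⟫_ℝ + lam * ∑ i, (p * (|x k i| + ε k i) ^ (p - 1)) * |z i| :=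
    ⟨_, rfl⟩
  have hsub : ∀ z, subObj n p lam β f (x k) (y k) (ε k) z
      = hfun z + β / 2 * ‖z - y k‖ ^ 2 := by
    intro z; simp only [hfundef, subObj]; ring
  have hwpos : ∀ i : Fin n, 0 ≤ p * (|x k i| + ε k i) ^ (p - 1) := by
    intro i
    have hε := eirl1_eps_pos H k i
    exact mul_nonneg H.hp0.le (Real.rpow_nonneg (by positivity) _)
  -- convexity of hfun
  have hfconv : ConvexOn ℝ Set.univ hfun := by
    rw [hfundef]
    refine ⟨convex_univ, ?_⟩
    intro u _ v _ a b ha hb hab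
    simp only [smul_eq_mul]
    have he : ⟪gradient f (y k), a • u + b • v⟫_ℝ
        = a * ⟪gradient f (y k), u⟫_ℝ + b * ⟪gradient f (y k), v⟫_ℝ := by
      rw [inner_add_right, real_inner_smul_right, real_inner_smul_right]
    have hS : ∑ i, (p * (|x k i| + ε k i) ^ (p - 1)) * |(a • u + b • v : Vec n) i|
        ≤ a * ∑ i, (p * (|x k i| + ε k i) ^ (p - 1)) * |u i|
          + b * ∑ i, (p * (|x k i| + ε k i) ^ (p - 1)) * |v i| := by
      rw [Finset.mul_sum, Finset.mul_sum, ← Finset.sum_add_distrib]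
      refine Finset.sum_le_sum (fun i _ => ?_)
      have happ : (a • u + b • v : Vec n) i = a * u i + b * v i := by
        simp [PiLp.add_apply, PiLp.smul_apply]
      rw [happ]
      have habs : |a * u i + b * v i| ≤ a * |u i| + b * |v i| := by
        calc |a * u i + b * v i| ≤ |a * u i| + |b * v i| := abs_add_le _ _
          _ = a * |u i| + b * |v i| := by
              rw [abs_mul, abs_mul, abs_of_nonneg ha, abs_of_nonneg hb]
      nlinarith [mul_le_mul_of_nonneg_left habs (hwpos i)]
    have := mul_le_mul_of_nonneg_left hS H.hlam.le
    nlinarith [he, this]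
  -- weak minimality
  have hweak : ∀ z, hfun (x (k + 1)) + β / 2 * ‖x (k + 1) - y k‖ ^ 2
      ≤ hfun z + β / 2 * ‖z - y k‖ ^ 2 := by
    intro z
    rcases eq_or_ne z (x (k + 1)) with rfl | hne
    · exact le_refl _
    · have := (H.hmin k z hne).le
      rw [hsub, hsub] at this
      exact this
  have hAstr := aux_strong_min hfconv hβpos (y k) (x (k + 1)) hweak (x k)
  -- descent lemma
  have h2 := aux_descent H.hdiff H.hlip (y k) (x (k + 1))
  -- convexity of f
  have h3 := aux_conv_tangent H.hdiff H.hconv (y k) (x k)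
  -- concavity tangent for the rpow sums
  have h4 : ∑ i, (|x (k + 1) i| + ε (k + 1) i) ^ p
      ≤ ∑ i, (|x k i| + ε k i) ^ p
        + (∑ i, (p * (|x k i| + ε k i) ^ (p - 1)) * |x (k + 1) i|
          - ∑ i, (p * (|x k i| + ε k i) ^ (p - 1)) * |x k i|) := by
    rw [← Finset.sum_sub_distrib, ← Finset.sum_add_distrib]
    refine Finset.sum_le_sum (fun i _ => ?_)
    have hs : 0 < |x k i| + ε k i := by
      have := eirl1_eps_pos H k i
      positivity
    have ht : 0 ≤ |x (k + 1) i| + ε (k + 1) i := by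
      have := eirl1_eps_pos H (k + 1) i
      positivity
    have htan := aux_rpow_tangent H.hp0 H.hp1 hs ht
    have hεle : ε (k + 1) i ≤ ε k i := by
      have h1 := H.hεdec k i
      have h2 := (eirl1_eps_pos H k i)
      nlinarith [H.hμ1]
    have hmono : p * (|x k i| + ε k i) ^ (p - 1)
        * ((|x (k + 1) i| + ε (k + 1) i) - (|x k i| + ε k i))
        ≤ p * (|x k i| + ε k i) ^ (p - 1) * (|x (k + 1) i| - |x k i|) :=
      mul_le_mul_of_nonneg_left (by linarith) (hwpos i)
    have : (p * (|x k i| + ε k i) ^ (p - 1)) * |x (k + 1) i|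
        - (p * (|x k i| + ε k i) ^ (p - 1)) * |x k i|
        = p * (|x k i| + ε k i) ^ (p - 1) * (|x (k + 1) i| - |x k i|) := by ring
    rw [this]
    linarith
  -- combine
  have h4' := mul_le_mul_of_nonneg_left h4 H.hlam.le
  have hβLf : Lf / 2 * ‖x (k + 1) - y k‖ ^ 2 ≤ β / 2 * ‖x (k + 1) - y k‖ ^ 2 := by
    have := mul_le_mul_of_nonneg_right H.hβ.le (sq_nonneg ‖x (k + 1) - y k‖)
    linarith
  have hnrev : ‖x k - x (k + 1)‖ = ‖x (k + 1) - x k‖ := norm_sub_rev _ _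
  have hi1 : ⟪gradient f (y k), x (k + 1) - y k⟫_ℝ
      = ⟪gradient f (y k), x (k + 1)⟫_ℝ - ⟪gradient f (y k), y k⟫_ℝ := inner_sub_right _ _ _
  have hi2 : ⟪gradient f (y k), x k - y k⟫_ℝ
      = ⟪gradient f (y k), x k⟫_ℝ - ⟪gradient f (y k), y k⟫_ℝ := inner_sub_right _ _ _
  rw [hfundef] at hAstr
  dsimp only at hAstr
  rw [hnrev] at hAstr
  simp only [Fobj]
  rw [Finset.mul_sum] at h4'
  rw [Finset.mul_sum]
  linarith [hAstr, h2, h3, h4', hβLf, hi1, hi2]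

end Step

/-- Lemma 2.1(iv): the extrapolation gaps vanish:
`‖yᵏ − xᵏ‖ → 0` and `‖yᵏ⁻¹ − xᵏ‖ → 0`. -/
theorem stmt_3 (n : ℕ) (p lam β Lf μ αbar : ℝ) (f : Vec n → ℝ)
    (x y : ℕ → Vec n) (ε : ℕ → Fin n → ℝ) (α : ℕ → ℝ)
    (H : EIRL1 n p lam β Lf μ αbar f x y ε α) :
    Tendsto (fun k => ‖y k - x k‖) atTop (nhds 0) ∧
      Tendsto (fun k => ‖y k - x (k + 1)‖) atTop (nhds 0) := by
  have hβpos : 0 < β := lt_of_le_of_lt H.hLf H.hβ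
  obtain ⟨D, hD⟩ : ∃ D : ℕ → ℝ, D = fun k => ‖x k - x (k - 1)‖ := ⟨_, rfl⟩
  obtain ⟨S, hS⟩ : ∃ S : ℕ → ℝ,
      S = fun k => Fobj n p lam f (x k) (ε k) + β / 2 * D k ^ 2 := ⟨_, rfl⟩
  have hD0 : D 0 = 0 := by simp [hD]
  have hDnn : ∀ k, 0 ≤ D k := by
    intro k; simp only [hD]; exact norm_nonneg _
  have hDk1 : ∀ k, D (k + 1) = ‖x (k + 1) - x k‖ := by
    intro k; simp [hD]
  have hxy : ∀ k, ‖x k - y k‖ = α k * D k := by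
    intro k
    rw [H.hy k]
    have he : x k - (x k + α k • (x k - x (k - 1))) = -(α k • (x k - x (k - 1))) := by
      module
    rw [he, norm_neg, norm_smul, Real.norm_eq_abs, abs_of_nonneg (H.hα0 k)]
    simp [hD]
  have hc : 0 < β / 2 * (1 - αbar ^ 2) := by
    have h1 : αbar ^ 2 < 1 := by nlinarith [H.hαbar0, H.hαbar1]
    exact mul_pos (by linarith) (by linarith)
  have hstep' : ∀ k, S (k + 1) + (β / 2 * (1 - αbar ^ 2)) * D k ^ 2 ≤ S k := by
    intro k
    have h1 := eirl1_step H k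
    rw [hxy k] at h1
    have hαk : (α k * D k) ^ 2 ≤ αbar ^ 2 * D k ^ 2 := by
      have h := pow_le_pow_left₀ (H.hα0 k) (H.hα1 k) 2
      nlinarith [sq_nonneg (D k), h]
    have h2 := mul_le_mul_of_nonneg_left hαk (by linarith : (0:ℝ) ≤ β / 2)
    rw [hS]
    dsimp only
    rw [hDk1 k]
    nlinarith [h1, h2]
  have hanti : ∀ k, S (k + 1) ≤ S k := by
    intro k
    have := mul_nonneg hc.le (sq_nonneg (D k))
    linarith [hstep' k]
  have hantitone : Antitone S := antitone_nat_of_succ_le hanti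
  have hS0 : S 0 = Fobj n p lam f (x 0) (ε 0) := by
    rw [hS]; dsimp only; rw [hD0]; ring
  have hεk : ∀ k i, 0 ≤ ε k i := fun k i => (eirl1_eps_pos H k i).le
  have hFF : ∀ k, Fobj n p lam f (x k) 0 ≤ Fobj n p lam f (x k) (ε k) := by
    intro k
    simp only [Fobj, Pi.zero_apply, add_zero]
    have hsum : ∑ i, |x k i| ^ p ≤ ∑ i, (|x k i| + ε k i) ^ p := by
      refine Finset.sum_le_sum fun i _ => ?_
      exact Real.rpow_le_rpow (abs_nonneg _) (by linarith [hεk k i]) H.hp0.le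
    nlinarith [mul_le_mul_of_nonneg_left hsum H.hlam.le]
  have hFS : ∀ k, Fobj n p lam f (x k) (ε k) ≤ S k := by
    intro k; rw [hS]; dsimp only; nlinarith [sq_nonneg (D k), hβpos]
  have hmem : ∀ k, x k ∈ {z : Vec n | Fobj n p lam f z 0 ≤ Fobj n p lam f (x 0) (ε 0)} := by
    intro k
    have := hantitone (Nat.zero_le k)
    exact le_trans (hFF k) (le_trans (hFS k) (by rw [← hS0]; exact this))
  obtain ⟨R, hR⟩ := H.hlevel.subset_closedBall 0
  have hcont : ContinuousOn f (Metric.closedBall 0 R) := (H.hdiff.continuous).continuousOn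
  have hbdd : BddBelow (f '' Metric.closedBall 0 R) :=
    (isCompact_closedBall (0 : Vec n) R).bddBelow_image hcont
  obtain ⟨m, hm⟩ := hbdd
  have hmlow : ∀ k, m ≤ S k := by
    intro k
    have h1 : m ≤ f (x k) := hm (Set.mem_image_of_mem f (hR (hmem k)))
    have h2 : 0 ≤ lam * ∑ i, (|x k i| + ε k i) ^ p := by
      refine mul_nonneg H.hlam.le (Finset.sum_nonneg fun i _ => Real.rpow_nonneg ?_ _)
      have := hεk k i
      positivity
    have h3 := hFS k
    simp only [Fobj] at h3
    linarith
  have hSbdd : BddBelow (Set.range S) := ⟨m, by rintro s ⟨k, rfl⟩; exact hmlow k⟩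
  have hStend : Tendsto S atTop (nhds (⨅ k, S k)) := tendsto_atTop_ciInf hantitone hSbdd
  have hdiff0 : Tendsto (fun k => S k - S (k + 1)) atTop (nhds 0) := by
    have := hStend.sub (hStend.comp (tendsto_add_atTop_nat 1))
    simpa using this
  have hD2 : Tendsto (fun k => D k ^ 2) atTop (nhds 0) := by
    apply squeeze_zero (fun k => sq_nonneg (D k)) (g := fun k => (S k - S (k + 1)) / (β / 2 * (1 - αbar ^ 2)))
    · intro k
      rw [le_div_iff₀ hc]
      linarith [hstep' k]
    · have := hdiff0.div_const (β / 2 * (1 - αbar ^ 2))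
      simpa using this
  have hDt : Tendsto D atTop (nhds 0) := by
    have heq : D = fun k => Real.sqrt (D k ^ 2) := by
      funext k; exact (Real.sqrt_sq (hDnn k)).symm
    rw [heq]
    have := (Real.continuous_sqrt.tendsto' 0 0 Real.sqrt_zero).comp hD2
    exact this
  have goal1 : Tendsto (fun k => ‖y k - x k‖) atTop (nhds 0) := by
    apply squeeze_zero (fun k => norm_nonneg _) (g := fun k => αbar * D k)
    · intro k
      rw [norm_sub_rev, hxy k]
      exact mul_le_mul_of_nonneg_right (H.hα1 k) (hDnn k)
    · simpa using hDt.const_mul αbar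
  refine ⟨goal1, ?_⟩
  apply squeeze_zero (fun k => norm_nonneg _) (g := fun k => ‖y k - x k‖ + D (k + 1))
  · intro k
    have htri : ‖y k - x (k + 1)‖ ≤ ‖y k - x k‖ + ‖x k - x (k + 1)‖ := by
      have := dist_triangle (y k) (x k) (x (k + 1))
      simpa [dist_eq_norm] using this
    rw [hDk1 k, norm_sub_rev (x (k + 1)) (x k)]
    exact htri
  · have := goal1.add (hDt.comp (tendsto_add_atTop_nat 1))
    simpa using this
end
end

section
/- (Theorem 2.2(i), zero components stay zero) Suppose C > 0 satisfies ‖∇f(y^k) + β(x^{k+1} − y^k)‖_∞ < C for all k (such a C exists since {x^k} and {y^k} are bounded). If w_i^{k̃} > C/λ for some index i and some iteration k̃, then x_i^k = 0 for all k > k̃. -/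
open Filter
open scoped BigOperators InnerProductSpace

noncomputable section

lemma key_sum {n : ℕ} (F : Fin n → ℝ → ℝ) (v : Vec n) (i : Fin n) (s : ℝ) :
    (∑ j, F j ((WithLp.toLp 2 (Function.update v i s) : Vec n) j))
      = (∑ j, F j (v j)) + (F i s - F i (v i)) := by
  have h1 : (∑ j, (F j ((WithLp.toLp 2 (Function.update v i s) : Vec n) j) - F j (v j)))
      = F i s - F i (v i) := by
    rw [Finset.sum_eq_single i]
    · simp
    · intro b _ hb
      have : (WithLp.toLp 2 (Function.update v i s) : Vec n) b = v b := Function.update_of_ne hb _ _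
      rw [this, sub_self]
    · simp
  have h2 : (∑ j, (F j ((WithLp.toLp 2 (Function.update v i s) : Vec n) j) - F j (v j)))
      = (∑ j, F j ((WithLp.toLp 2 (Function.update v i s) : Vec n) j)) - ∑ j, F j (v j) :=
    Finset.sum_sub_distrib _ _
  linarith

lemma normsq_eq {n : ℕ} (w : Vec n) : ‖w‖ ^ 2 = ∑ j, (w j) ^ 2 := by
  rw [EuclideanSpace.norm_eq, Real.sq_sqrt (by positivity)]
  simp [sq_abs]

lemma subObj_update (n : ℕ) (p lam β : ℝ) (f : Vec n → ℝ) (xk yk : Vec n)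
    (εk : Fin n → ℝ) (v : Vec n) (i : Fin n) (s : ℝ) :
    subObj n p lam β f xk yk εk (WithLp.toLp 2 (Function.update v i s))
      = subObj n p lam β f xk yk εk v
        + gradient f yk i * (s - v i)
        + β / 2 * ((s - yk i) ^ 2 - (v i - yk i) ^ 2)
        + lam * ((p * (|xk i| + εk i) ^ (p - 1)) * (|s| - |v i|)) := by
  have hinner : ∀ z : Vec n, ⟪gradient f yk, z⟫_ℝ = ∑ j, gradient f yk j * z j := by
    intro z
    rw [PiLp.inner_apply]; simp only [RCLike.inner_apply, conj_trivial, mul_comm]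
  have hsub : ∀ z : Vec n, ∀ j, (z - yk) j = z j - yk j := fun z j => rfl
  have hn : ∀ z : Vec n, ‖z - yk‖ ^ 2 = ∑ j, (z j - yk j) ^ 2 := by
    intro z; rw [normsq_eq]; simp [hsub]
  simp only [subObj, hinner, hn]
  rw [key_sum (fun j t => gradient f yk j * t) v i s,
      key_sum (fun j t => (t - yk j) ^ 2) v i s,
      key_sum (fun j t => (p * (|xk j| + εk j) ^ (p - 1)) * |t|) v i s]
  ring

lemma zero_step (n : ℕ) (p lam β : ℝ) (f : Vec n → ℝ) (x y : ℕ → Vec n)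
    (ε : ℕ → Fin n → ℝ) (hβ : 0 < β)
    (hmin : ∀ k z, z ≠ x (k + 1) →
      subObj n p lam β f (x k) (y k) (ε k) (x (k + 1))
        < subObj n p lam β f (x k) (y k) (ε k) z)
    (C : ℝ)
    (hC : ∀ k, ∀ i, |gradient f (y k) i + β * (x (k + 1) i - y k i)| < C)
    (i : Fin n) (k : ℕ)
    (hw : C < lam * (p * (|x k i| + ε k i) ^ (p - 1))) : x (k + 1) i = 0 := by
  by_contra ha
  have habs := hC k i
  obtain ⟨hlb, hub⟩ := abs_lt.mp habs
  set a := x (k + 1) i with hadef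
  set g := gradient f (y k) i with hgdef
  set yi := y k i with hyidef
  set w := p * (|x k i| + ε k i) ^ (p - 1) with hwdef
  have hD : 0 < lam * w - C := by linarith
  rcases lt_or_gt_of_ne ha with hneg | hpos
  · -- a < 0
    set t := min (-a / 2) ((lam * w - C) / β) with htdef
    have ht0 : 0 < t := lt_min (by linarith) (div_pos hD hβ)
    have hta : t ≤ -a / 2 := min_le_left _ _
    have hbt : β * t ≤ lam * w - C := by
      have := min_le_right (-a / 2) ((lam * w - C) / β)
      calc β * t ≤ β * ((lam * w - C) / β) := by nlinarith
        _ = lam * w - C := by field_simp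
    have hsne : a + t ≠ a := by linarith
    have hzne : (WithLp.toLp 2 (Function.update (x (k + 1)) i (a + t)) : Vec n) ≠ x (k + 1) := by
      intro h
      have : (WithLp.toLp 2 (Function.update (x (k + 1)) i (a + t)) : Vec n) i = x (k + 1) i := by rw [h]
      rw [WithLp.ofLp_toLp, Function.update_self] at this
      exact hsne this
    have hlt := hmin k _ hzne
    rw [subObj_update] at hlt
    have habs1 : |a + t| = -(a + t) := abs_of_neg (by linarith)
    have habs2 : |a| = -a := abs_of_neg hneg
    rw [← hadef, ← hgdef, ← hyidef, ← hwdef, habs1, habs2] at hlt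
    nlinarith [mul_pos ht0 hD, mul_le_mul_of_nonneg_right hbt ht0.le,
      mul_lt_mul_of_pos_left (show g + β * (a - yi) - lam * w < -(lam * w - C) by linarith) ht0]
  · -- a > 0
    set t := min (a / 2) ((lam * w - C) / β) with htdef
    have ht0 : 0 < t := lt_min (by linarith) (div_pos hD hβ)
    have hta : t ≤ a / 2 := min_le_left _ _
    have hbt : β * t ≤ lam * w - C := by
      have := min_le_right (a / 2) ((lam * w - C) / β)
      calc β * t ≤ β * ((lam * w - C) / β) := by nlinarith
        _ = lam * w - C := by field_simp
    have hsne : a - t ≠ a := by intro h; linarith [sub_eq_self.mp h]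
    have hzne : (WithLp.toLp 2 (Function.update (x (k + 1)) i (a - t)) : Vec n) ≠ x (k + 1) := by
      intro h
      have : (WithLp.toLp 2 (Function.update (x (k + 1)) i (a - t)) : Vec n) i = x (k + 1) i := by rw [h]
      rw [WithLp.ofLp_toLp, Function.update_self] at this
      exact hsne this
    have hlt := hmin k _ hzne
    rw [subObj_update] at hlt
    have habs1 : |a - t| = a - t := abs_of_pos (by linarith)
    have habs2 : |a| = a := abs_of_pos hpos
    rw [← hadef, ← hgdef, ← hyidef, ← hwdef, habs1, habs2] at hlt
    nlinarith [mul_pos ht0 hD, mul_le_mul_of_nonneg_right hbt ht0.le,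
      mul_lt_mul_of_pos_left (show -(g + β * (a - yi)) - lam * w < -(lam * w - C) by linarith) ht0]

/-- Theorem 2.2(i): once a weight exceeds `C/λ`, the corresponding component
stays zero in all later iterations.  Here `C > 0` is a uniform bound on
`‖∇f(yᵏ) + β(xᵏ⁺¹ − yᵏ)‖_∞`. -/
theorem stmt_6 (n : ℕ) (p lam β Lf μ αbar : ℝ) (f : Vec n → ℝ)
    (x y : ℕ → Vec n) (ε : ℕ → Fin n → ℝ) (α : ℕ → ℝ)
    (H : EIRL1 n p lam β Lf μ αbar f x y ε α)
    (C : ℝ) (hC0 : 0 < C)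
    (hC : ∀ k, ∀ i, |gradient f (y k) i + β * (x (k + 1) i - y k i)| < C)
    (i : Fin n) (ktil : ℕ)
    (hw : p * (|x ktil i| + ε ktil i) ^ (p - 1) > C / lam) :
    ∀ k > ktil, x k i = 0 := by
  have hβ0 : 0 < β := lt_of_le_of_lt H.hLf H.hβ
  have hεall : ∀ k, 0 < ε k i := by
    intro k
    cases k with
    | zero => exact H.hε0 i
    | succ m => exact H.hεpos m i
  have hbase : C < lam * (p * (|x ktil i| + ε ktil i) ^ (p - 1)) :=
    (div_lt_iff₀' H.hlam).mp hw
  have main : ∀ k, ktil ≤ k →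
      C < lam * (p * (|x k i| + ε k i) ^ (p - 1)) ∧ (ktil < k → x k i = 0) := by
    intro k hk
    induction k, hk using Nat.le_induction with
    | base => exact ⟨hbase, fun h => absurd h (lt_irrefl _)⟩
    | succ m hm ih =>
      have hx0 : x (m + 1) i = 0 :=
        zero_step n p lam β f x y ε hβ0 H.hmin C hC i m ih.1
      refine ⟨?_, fun _ => hx0⟩
      have hεlt : ε (m + 1) i ≤ ε m i := by
        have := H.hεdec m i
        nlinarith [hεall m, H.hμ1]
      have hble : |x (m + 1) i| + ε (m + 1) i ≤ |x m i| + ε m i := by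
        have : |x (m + 1) i| = 0 := by rw [hx0]; exact abs_zero
        rw [this]
        have : (0 : ℝ) ≤ |x m i| := abs_nonneg _
        linarith
      have hbpos : 0 < |x (m + 1) i| + ε (m + 1) i := by
        have := abs_nonneg (x (m + 1) i)
        linarith [hεall (m + 1)]
      have hmono : (|x m i| + ε m i) ^ (p - 1) ≤ (|x (m + 1) i| + ε (m + 1) i) ^ (p - 1) :=
        Real.rpow_le_rpow_of_nonpos hbpos hble (by linarith [H.hp1])
      have : lam * (p * (|x m i| + ε m i) ^ (p - 1))
          ≤ lam * (p * (|x (m + 1) i| + ε (m + 1) i) ^ (p - 1)) :=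
        mul_le_mul_of_nonneg_left
          (mul_le_mul_of_nonneg_left hmono H.hp0.le) H.hlam.le
      linarith [ih.1]
  intro k hk
  exact (main k hk.le).2 hk
end
end
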